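/- Let c ∈ ℝ with c ≠ -1 and c ≠ 0. The lattice equation with polynomial E(w,x,y,z) = z(y+c)(x-1) - w(x+c)(y-1), i.e. u_{n+1,m+1}(u_{n,m+1}+c)(u_{n+1,m}-1) = u_{n,m}(u_{n+1,m}+c)(u_{n,m+1}-1), admits the five-point generalized symmetry with generator g_{n,m} = u_{n,m}(u_{n,m}-1)·(1/D_{n,m} - 1/D_{n-1,m}), where D_{n,m} = u_{n+1,m}u_{n,m} + c(u_{n+1,m}+u_{n,m}-1): for every solution u : ℤ × ℤ → ℝ of the equation satisfying D_{n,m} ≠ 0 for all (n,m), and every (n,m) ∈ ℤ², the linearized equation g_{n,m}·∂₁E + g_{n+1,m}·∂₂E + g_{n,m+1}·∂₃E + g_{n+1,m+1}·∂₄E = 0 holds, where each ∂ᵢE is evaluated at (u_{n,m}, u_{n+1,m}, u_{n,m+1}, u_{n+1,m+1}). -/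

import Mathlib

set_option maxHeartbeats 1000000 in
theorem stmt_2
    (c : ℝ) (hc1 : c ≠ -1) (hc0 : c ≠ 0)
    (E : ℝ → ℝ → ℝ → ℝ → ℝ)
    (hE : ∀ w x y z : ℝ, E w x y z = z * (y + c) * (x - 1) - w * (x + c) * (y - 1))
    (u : ℤ × ℤ → ℝ)
    (hu : ∀ n m : ℤ, E (u (n, m)) (u (n + 1, m)) (u (n, m + 1)) (u (n + 1, m + 1)) = 0)
    (D : ℤ × ℤ → ℝ)
    (hD : ∀ n m : ℤ, D (n, m) = u (n + 1, m) * u (n, m) + c * (u (n + 1, m) + u (n, m) - 1))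
    (hDne : ∀ n m : ℤ, D (n, m) ≠ 0)
    (g : ℤ × ℤ → ℝ)
    (hg : ∀ n m : ℤ, g (n, m) = u (n, m) * (u (n, m) - 1) * (1 / D (n, m) - 1 / D (n - 1, m)))
    (n m : ℤ) :
    g (n, m) * deriv (fun w => E w (u (n + 1, m)) (u (n, m + 1)) (u (n + 1, m + 1))) (u (n, m))
      + g (n + 1, m) * deriv (fun x => E (u (n, m)) x (u (n, m + 1)) (u (n + 1, m + 1))) (u (n + 1, m))
      + g (n, m + 1) * deriv (fun y => E (u (n, m)) (u (n + 1, m)) y (u (n + 1, m + 1))) (u (n, m + 1))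
      + g (n + 1, m + 1) * deriv (fun z => E (u (n, m)) (u (n + 1, m)) (u (n, m + 1)) z) (u (n + 1, m + 1)) = 0 := by
  have hc1' : c + 1 ≠ 0 := fun h => hc1 (by linarith)
  have hu1 := hu (n - 1) m
  have hu2 := hu n m
  have hu3 := hu (n + 1) m
  rw [hE] at hu1 hu2 hu3
  have hD1 := hD (n - 1) m
  have hD2 := hD n m
  have hD3 := hD (n + 1) m
  have hD4 := hD (n - 1) (m + 1)
  have hD5 := hD n (m + 1)
  have hD6 := hD (n + 1) (m + 1)
  have hP0 := hDne (n - 1) m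
  have hQ0 := hDne n m
  have hR0 := hDne (n + 1) m
  have hPA0 := hDne (n - 1) (m + 1)
  have hQA0 := hDne n (m + 1)
  have hRA0 := hDne (n + 1) (m + 1)
  have hg1 := hg n m
  have hg2 := hg (n + 1) m
  have hg3 := hg n (m + 1)
  have hg4 := hg (n + 1) (m + 1)
  simp only [sub_add_cancel] at hu1 hD1 hD4
  simp only [add_sub_cancel_right] at hg2 hg4
  set a := u (n - 1, m) with ha
  set b := u (n, m) with hb
  set d := u (n + 1, m) with hd
  set e0 := u (n + 1 + 1, m) with he0
  set A0 := u (n - 1, m + 1) with hA0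
  set B0 := u (n, m + 1) with hB0
  set C0 := u (n + 1, m + 1) with hC0
  set F0 := u (n + 1 + 1, m + 1) with hF0
  set PP := D (n - 1, m) with hPP
  set QQ := D (n, m) with hQQ
  set RR := D (n + 1, m) with hRR
  set PA := D (n - 1, m + 1) with hPAd
  set QA := D (n, m + 1) with hQAd
  set RA := D (n + 1, m + 1) with hRAd
  have hd1 : deriv (fun w => E w d B0 C0) b = -((d + c) * (B0 - 1)) := by
    have hfun : (fun w => E w d B0 C0)
        = fun w => w * (-((d + c) * (B0 - 1))) + C0 * (B0 + c) * (d - 1) := by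
      funext w; rw [hE]; ring
    rw [hfun]
    simpa using (((hasDerivAt_id b).mul_const (-((d + c) * (B0 - 1)))).add_const
      (C0 * (B0 + c) * (d - 1))).deriv
  have hd2 : deriv (fun x => E b x B0 C0) d = C0 * (B0 + c) - b * (B0 - 1) := by
    have hfun : (fun x => E b x B0 C0)
        = fun x => x * (C0 * (B0 + c) - b * (B0 - 1)) + (-(C0 * (B0 + c)) - b * c * (B0 - 1)) := by
      funext x; rw [hE]; ring
    rw [hfun]
    simpa using (((hasDerivAt_id d).mul_const (C0 * (B0 + c) - b * (B0 - 1))).add_const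
      (-(C0 * (B0 + c)) - b * c * (B0 - 1))).deriv
  have hd3 : deriv (fun y => E b d y C0) B0 = C0 * (d - 1) - b * (d + c) := by
    have hfun : (fun y => E b d y C0)
        = fun y => y * (C0 * (d - 1) - b * (d + c)) + (C0 * c * (d - 1) + b * (d + c)) := by
      funext y; rw [hE]; ring
    rw [hfun]
    simpa using (((hasDerivAt_id B0).mul_const (C0 * (d - 1) - b * (d + c))).add_const
      (C0 * c * (d - 1) + b * (d + c))).deriv
  have hd4 : deriv (fun z => E b d B0 z) C0 = (B0 + c) * (d - 1) := by
    have hfun : (fun z => E b d B0 z)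
        = fun z => z * ((B0 + c) * (d - 1)) + (-(b * (d + c) * (B0 - 1))) := by
      funext z; rw [hE]; ring
    rw [hfun]
    simpa using (((hasDerivAt_id C0).mul_const ((B0 + c) * (d - 1))).add_const
      (-(b * (d + c) * (B0 - 1)))).deriv
  rw [hd1, hd2, hd3, hd4]
  have G1 : g (n, m) * (PP * QQ) = b * (b - 1) * (PP - QQ) := by
    rw [hg1]; field_simp
  have G2 : g (n + 1, m) * (QQ * RR) = d * (d - 1) * (QQ - RR) := by
    rw [hg2]; field_simp
  have G3 : g (n, m + 1) * (PA * QA) = B0 * (B0 - 1) * (PA - QA) := by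
    rw [hg3]; field_simp
  have G4 : g (n + 1, m + 1) * (QA * RA) = C0 * (C0 - 1) * (QA - RA) := by
    rw [hg4]; field_simp
  have X3 : B0 * (B0 - 1) * (PA - QA) * ((c + 1) * (PP * QQ))
      = (B0 * (d - 1) * (c + 1) * PP - (B0 - 1) * (a * (b + c) - B0 * (b - 1)) * QQ) * (PA * QA) := by
    rw [hD1, hD2, hD4, hD5]
    linear_combination ((((((-1*B0^3*C0 + 1*d*B0^3*C0) + (1*b*d*B0^2 + (1*b*d*B0^2*C0 + -1*b*d*B0^3))) + ((-1*b*d*B0^3*C0 + (-3*c*B0^2*C0 + 3*c*d*B0^2*C0)) + (1*c*b*B0^2 + (1*c*b*B0^2*C0 + -1*c*b*B0^3)))) + (((-1*c*b*B0^3*C0 + (2*c*b*d*B0*C0 + 2*c*b*d*B0^2)) + (-2*c*b*d*B0^2*C0 + (-2*c*b*d*B0^3 + 1*c^2*B0))) + ((-3*c^2*B0*C0 + (-2*c^2*B0^2 + 1*c^2*B0^3)) + (-1*c^2*d*B0 + (3*c^2*d*B0*C0 + 2*c^2*d*B0^2))))) + ((((-1*c^2*d*B0^3 + 2*c^2*b*B0*C0)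 + (2*c^2*b*B0^2 + (-2*c^2*b*B0^2*C0 + -2*c^2*b*B0^3))) + ((-1*c^2*b*d + (1*c^2*b*d*C0 + 3*c^2*b*d*B0)) + (-1*c^2*b*d*B0*C0 + (-2*c^2*b*d*B0^2 + 1*c^3)))) + (((-1*c^3*C0 + (-2*c^3*B0 + 1*c^3*B0^2)) + (-1*c^3*d + (1*c^3*d*C0 + 2*c^3*d*B0))) + ((-1*c^3*d*B0^2 + (-1*c^3*b + 1*c^3*b*C0)) + (3*c^3*b*B0 + (-1*c^3*b*B0*C0 + -2*c^3*b*B0^2))))))) * hu1 + (((((1*A0*B0^3 + (-1*b*A0*B0^3 + -1*a*b*B0^2)) + ((1*c*B0^3 + 2*c*A0*B0^2) + (1*c*A0*B0^3 + -1*c*b*B0^3))) + (((-2*c*b*A0*B0^2 + -1*c*b*A0*B0^3) + (-1*c*a*B0^2 + -2*c*a*b*B0^2)) + ((-1*c^2*B0 + 2*c^2*B0^2) + (1*c^2*B0^3 + 1*c^2*A0*B0)))) + (((2*c^2*A0*B0^2 + (1*c^2*b*B0 + -2*c^2*b*B0^2)) + ((-1*c^2*b*B0^3 + -1*c^2*b*A0*B0)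 + (-2*c^2*b*A0*B0^2 + -2*c^2*a*B0^2))) + (((-1*c^2*a*b*B0^2 + -1*c^3*B0) + (2*c^3*B0^2 + 1*c^3*A0*B0)) + ((1*c^3*b*B0 + -2*c^3*b*B0^2) + (-1*c^3*b*A0*B0 + -1*c^3*a*B0^2)))))) * hu2
  have X4 : C0 * (C0 - 1) * (QA - RA) * ((c + 1) * (QQ * RR))
      = (C0 * (e0 - 1) * (c + 1) * QQ - (C0 - 1) * (b * (d + c) - C0 * (d - 1)) * RR) * (QA * RA) := by
    rw [hD2, hD3, hD5, hD6]
    linear_combination ((((((-1*C0^3*F0 + 1*e0*C0^3*F0) + (1*d*e0*C0^2 + (1*d*e0*C0^2*F0 + -1*d*e0*C0^3))) + ((-1*d*e0*C0^3*F0 + (-3*c*C0^2*F0 + 3*c*e0*C0^2*F0)) + (1*c*d*C0^2 + (1*c*d*C0^2*F0 + -1*c*d*C0^3)))) + (((-1*c*d*C0^3*F0 + (2*c*d*e0*C0*F0 + 2*c*d*e0*C0^2)) + (-2*c*d*e0*C0^2*F0 + (-2*c*d*e0*C0^3 + 1*c^2*C0))) + ((-3*c^2*C0*F0 + (-2*c^2*C0^2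 + 1*c^2*C0^3)) + (-1*c^2*e0*C0 + (3*c^2*e0*C0*F0 + 2*c^2*e0*C0^2))))) + ((((-1*c^2*e0*C0^3 + 2*c^2*d*C0*F0) + (2*c^2*d*C0^2 + (-2*c^2*d*C0^2*F0 + -2*c^2*d*C0^3))) + ((-1*c^2*d*e0 + (1*c^2*d*e0*F0 + 3*c^2*d*e0*C0)) + (-1*c^2*d*e0*C0*F0 + (-2*c^2*d*e0*C0^2 + 1*c^3)))) + (((-1*c^3*F0 + (-2*c^3*C0 + 1*c^3*C0^2)) + (-1*c^3*e0 + (1*c^3*e0*F0 + 2*c^3*e0*C0))) + ((-1*c^3*e0*C0^2 + (-1*c^3*d + 1*c^3*d*F0)) + (3*c^3*d*C0 + (-1*c^3*d*C0*F0 + -2*c^3*d*C0^2))))))) * hu2 + (((((1*B0*C0^3 + (-1*d*B0*C0^3 + -1*b*d*C0^2)) + ((1*c*C0^3 + 2*c*B0*C0^2) + (1*c*B0*C0^3 + -1*c*d*C0^3))) + (((-2*c*d*B0*C0^2 + -1*c*d*B0*C0^3) + (-1*c*b*C0^2 + -2*c*b*d*C0^2)) + ((-1*c^2*C0 + 2*c^2*C0^2)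 + (1*c^2*C0^3 + 1*c^2*B0*C0)))) + (((2*c^2*B0*C0^2 + (1*c^2*d*C0 + -2*c^2*d*C0^2)) + ((-1*c^2*d*C0^3 + -1*c^2*d*B0*C0) + (-2*c^2*d*B0*C0^2 + -2*c^2*b*C0^2))) + (((-1*c^2*b*d*C0^2 + -1*c^3*C0) + (2*c^3*C0^2 + 1*c^3*B0*C0)) + ((1*c^3*d*C0 + -2*c^3*d*C0^2) + (-1*c^3*d*B0*C0 + -1*c^3*b*C0^2)))))) * hu3
  have hG3 : g (n, m + 1) * ((c + 1) * (PP * QQ))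
      = B0 * (d - 1) * (c + 1) * PP - (B0 - 1) * (a * (b + c) - B0 * (b - 1)) * QQ := by
    have h : g (n, m + 1) * ((c + 1) * (PP * QQ)) * (PA * QA)
        = (B0 * (d - 1) * (c + 1) * PP - (B0 - 1) * (a * (b + c) - B0 * (b - 1)) * QQ) * (PA * QA) := by
      rw [show g (n, m + 1) * ((c + 1) * (PP * QQ)) * (PA * QA)
          = g (n, m + 1) * (PA * QA) * ((c + 1) * (PP * QQ)) from by ring, G3]
      exact X3
    exact mul_right_cancel₀ (mul_ne_zero hPA0 hQA0) h
  have hG4 : g (n + 1, m + 1) * ((c + 1) * (QQ * RR))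
      = C0 * (e0 - 1) * (c + 1) * QQ - (C0 - 1) * (b * (d + c) - C0 * (d - 1)) * RR := by
    have h : g (n + 1, m + 1) * ((c + 1) * (QQ * RR)) * (QA * RA)
        = (C0 * (e0 - 1) * (c + 1) * QQ - (C0 - 1) * (b * (d + c) - C0 * (d - 1)) * RR) * (QA * RA) := by
      rw [show g (n + 1, m + 1) * ((c + 1) * (QQ * RR)) * (QA * RA)
          = g (n + 1, m + 1) * (QA * RA) * ((c + 1) * (QQ * RR)) from by ring, G4]
      exact X4
    exact mul_right_cancel₀ (mul_ne_zero hQA0 hRA0) h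
  have hM : (c + 1) * (PP * QQ * RR) ≠ 0 :=
    mul_ne_zero hc1' (mul_ne_zero (mul_ne_zero hP0 hQ0) hR0)
  have main : (g (n, m) * (-((d + c) * (B0 - 1))) + g (n + 1, m) * (C0 * (B0 + c) - b * (B0 - 1))
      + g (n, m + 1) * (C0 * (d - 1) - b * (d + c)) + g (n + 1, m + 1) * ((B0 + c) * (d - 1)))
      * ((c + 1) * (PP * QQ * RR)) = 0 := by
    have expand : (g (n, m) * (-((d + c) * (B0 - 1))) + g (n + 1, m) * (C0 * (B0 + c) - b * (B0 - 1))
        + g (n, m + 1) * (C0 * (d - 1) - b * (d + c)) + g (n + 1, m + 1) * ((B0 + c) * (d - 1)))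
        * ((c + 1) * (PP * QQ * RR))
        = (g (n, m) * (PP * QQ)) * (-((d + c) * (B0 - 1)) * ((c + 1) * RR))
          + (g (n + 1, m) * (QQ * RR)) * ((C0 * (B0 + c) - b * (B0 - 1)) * ((c + 1) * PP))
          + (g (n, m + 1) * ((c + 1) * (PP * QQ))) * ((C0 * (d - 1) - b * (d + c)) * RR)
          + (g (n + 1, m + 1) * ((c + 1) * (QQ * RR))) * (((B0 + c) * (d - 1)) * PP) := by ring
    rw [expand, G1, G2, hG3, hG4, hD1, hD2, hD3]
    linear_combination (((((((1*b*d^2*e0 + (-1*b*d^2*e0*B0 + -1*b^2*d^2*e0)) + (1*b^2*d^2*e0*B0 + (-1*a*b*d*e0*C0 + -1*a*b*d^2*e0))) + ((1*a*b*d^2*e0*C0 + (-1*a*b^2*d + 1*a*b^2*d*e0)) + (1*a*b^2*d^2 + (-1*a*b^2*d^2*e0 + -1*c*d*e0)))) + (((1*c*d*e0*C0 + (1*c*d*e0*B0 + 2*c*d^2*e0)) + (-1*c*d^2*e0*C0 + (-1*c*d^2*e0*B0 + 1*c*b*d*B0))) + ((2*c*b*d*e0 + (-1*c*b*d*e0*C0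 + -3*c*b*d*e0*B0)) + (-1*c*b*d^2*B0 + (-1*c*b*d^2*e0 + 1*c*b*d^2*e0*C0))))) + ((((1*c*b*d^2*e0*B0 + (-1*c*b^2*d*B0 + -1*c*b^2*d*e0)) + (2*c*b^2*d*e0*B0 + (1*c*b^2*d^2*B0 + -1*c*b^2*d^2*e0))) + ((-1*c*a*d*e0*C0 + (-1*c*a*d^2*e0 + 1*c*a*d^2*e0*C0)) + (1*c*a*b + (1*c*a*b*C0 + -1*c*a*b*e0)))) + (((-1*c*a*b*e0*C0 + (-2*c*a*b*d + -2*c*a*b*d*C0)) + (1*c*a*b*d*e0 + (1*c*a*b*d*e0*C0 + 1*c*a*b*d^2))) + ((1*c*a*b*d^2*C0 + (-2*c*a*b*d^2*e0 + -1*c*a*b^2)) + ((1*c*a*b^2*e0 + 1*c*a*b^2*d) + (-1*c*a*b^2*d*e0 + -1*c^2*C0)))))) + (((((-1*c^2*B0 + (1*c^2*e0*C0 + 1*c^2*e0*B0)) + (-1*c^2*d + (2*c^2*d*C0 + 2*c^2*d*B0))) + ((1*c^2*d*e0 + (-1*c^2*d*e0*C0 + -1*c^2*d*e0*B0)) + (1*c^2*d^2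 + (-1*c^2*d^2*C0 + -1*c^2*d^2*B0)))) + (((1*c^2*d^2*e0 + (1*c^2*b*C0 + 2*c^2*b*B0)) + (-1*c^2*b*e0*C0 + (-2*c^2*b*e0*B0 + 1*c^2*b*d))) + ((-2*c^2*b*d*C0 + (-3*c^2*b*d*B0 + 1*c^2*b*d*e0*C0)) + (1*c^2*b*d*e0*B0 + (-1*c^2*b*d^2 + 1*c^2*b*d^2*C0))))) + ((((1*c^2*b*d^2*B0 + (-1*c^2*b*d^2*e0 + -1*c^2*b^2*B0)) + (1*c^2*b^2*e0*B0 + (1*c^2*b^2*d*B0 + -1*c^2*b^2*d*e0))) + ((1*c^2*a + (1*c^2*a*C0 + -1*c^2*a*e0)) + (-1*c^2*a*e0*C0 + (-1*c^2*a*d + -2*c^2*a*d*C0)))) + (((1*c^2*a*d*e0*C0 + (1*c^2*a*d^2*C0 + -1*c^2*a*d^2*e0)) + (-1*c^2*a*b*d*e0 + (-1*c^3 + 1*c^3*e0))) + ((1*c^3*d + (1*c^3*b + -1*c^3*b*e0)) + ((-1*c^3*b*d + 1*c^3*a) + (-1*c^3*a*e0 + -1*c^3*a*d)))))))) * hu2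
  exact (mul_eq_zero.mp main).resolve_right hM
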